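/- For n > 1 and x in the open unit disk with |x| < 1, the single-valued polylogarithm sv(Li_n)(x) := Li_n(x) − (−1)^n ∑_{k=0}^{n−1} (−log|x|²)^k / k! · Li_n−k(conj(x)) satisfies sv(Li_n)(x) = ∑_{k=0}^{n−1} (log^k|x|²)/(k+1)! · P̃_{n−k}(x), where P̃_m(x) := ∑_{ℓ=0}^{m−1} (B_ℓ/ℓ!) · log^ℓ|x|² · (Li_m−ℓ(x) − (−1)^m Li_m−ℓ(conj(x))) and B_ℓ are Bernoulli numbers. -/

import Mathlib

open Finset

/-- Triangle sum swap. -/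
lemma triangle_swap {M : Type*} [AddCommMonoid M] (n : ℕ) (f : ℕ → ℕ → M) :
    ∑ k ∈ range n, ∑ ℓ ∈ range (n - k), f k ℓ
      = ∑ j ∈ range n, ∑ ℓ ∈ range (j + 1), f (j - ℓ) ℓ := by
  rw [Finset.sum_sigma', Finset.sum_sigma']
  refine Finset.sum_nbij' (fun p => ⟨p.1 + p.2, p.2⟩) (fun p => ⟨p.1 - p.2, p.2⟩)
    ?_ ?_ ?_ ?_ ?_
  · rintro ⟨a, b⟩ h
    simp only [mem_sigma, mem_range] at h ⊢
    omega
  · rintro ⟨a, b⟩ h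
    simp only [mem_sigma, mem_range] at h ⊢
    omega
  · rintro ⟨a, b⟩ h
    simp
  · rintro ⟨a, b⟩ h
    simp only [mem_sigma, mem_range] at h
    have hab : a - b + b = a := by omega
    simp [hab]
  · rintro ⟨a, b⟩ h
    simp

lemma bern_sum1 (j : ℕ) (hj : j ≠ 0) :
    ∑ ℓ ∈ range (j + 1), (bernoulli ℓ : ℚ) /
      ((Nat.factorial ℓ : ℚ) * (Nat.factorial (j - ℓ + 1) : ℚ)) = 0 := by
  have h := sum_bernoulli (j + 1)
  have hrw : ∀ ℓ ∈ range (j + 1), (bernoulli ℓ : ℚ) /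
      ((Nat.factorial ℓ : ℚ) * (Nat.factorial (j - ℓ + 1) : ℚ))
      = ((j + 1).choose ℓ : ℚ) * bernoulli ℓ / (Nat.factorial (j + 1) : ℚ) := by
    intro ℓ hℓ
    rw [mem_range] at hℓ
    have hle : ℓ ≤ j + 1 := by omega
    have hc := Nat.choose_mul_factorial_mul_factorial hle
    have h2 : j - ℓ + 1 = j + 1 - ℓ := by omega
    rw [h2]
    have hf : (Nat.factorial ℓ : ℚ) ≠ 0 := Nat.cast_ne_zero.mpr (Nat.factorial_ne_zero ℓ)
    have hf2 : (Nat.factorial (j + 1 - ℓ) : ℚ) ≠ 0 := Nat.cast_ne_zero.mpr (Nat.factorial_ne_zero _)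
    have hf3 : (Nat.factorial (j + 1) : ℚ) ≠ 0 := Nat.cast_ne_zero.mpr (Nat.factorial_ne_zero _)
    field_simp
    rw [← hc]
    push_cast
    ring
  rw [Finset.sum_congr rfl hrw, ← Finset.sum_div, h]
  simp [hj]

lemma bern_sum2 (j : ℕ) :
    ∑ ℓ ∈ range (j + 1), (-1 : ℚ) ^ ℓ * (bernoulli ℓ : ℚ) /
      ((Nat.factorial ℓ : ℚ) * (Nat.factorial (j - ℓ + 1) : ℚ)) = 1 / (Nat.factorial j : ℚ) := by
  have h := sum_bernoulli' (j + 1)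
  have hrw : ∀ ℓ ∈ range (j + 1), (-1 : ℚ) ^ ℓ * (bernoulli ℓ : ℚ) /
      ((Nat.factorial ℓ : ℚ) * (Nat.factorial (j - ℓ + 1) : ℚ))
      = ((j + 1).choose ℓ : ℚ) * bernoulli' ℓ / (Nat.factorial (j + 1) : ℚ) := by
    intro ℓ hℓ
    rw [mem_range] at hℓ
    have hle : ℓ ≤ j + 1 := by omega
    have hc := Nat.choose_mul_factorial_mul_factorial hle
    have h2 : j - ℓ + 1 = j + 1 - ℓ := by omega
    rw [h2, bernoulli'_eq_bernoulli]
    have hf : (Nat.factorial ℓ : ℚ) ≠ 0 := Nat.cast_ne_zero.mpr (Nat.factorial_ne_zero ℓ)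
    have hf2 : (Nat.factorial (j + 1 - ℓ) : ℚ) ≠ 0 := Nat.cast_ne_zero.mpr (Nat.factorial_ne_zero _)
    have hf3 : (Nat.factorial (j + 1) : ℚ) ≠ 0 := Nat.cast_ne_zero.mpr (Nat.factorial_ne_zero _)
    field_simp
    rw [← hc]
    push_cast
    ring
  rw [Finset.sum_congr rfl hrw, ← Finset.sum_div, h]
  rw [Nat.factorial_succ]
  have hf3 : (Nat.factorial j : ℚ) ≠ 0 := Nat.cast_ne_zero.mpr (Nat.factorial_ne_zero _)
  push_cast
  field_simp


lemma bern_sum1C (j : ℕ) (hj : j ≠ 0) :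
    ∑ ℓ ∈ range (j + 1), ((bernoulli ℓ : ℚ) : ℂ) /
      ((Nat.factorial ℓ : ℂ) * (Nat.factorial (j - ℓ + 1) : ℂ)) = 0 := by
  exact_mod_cast congrArg (fun q : ℚ => (q : ℂ)) (bern_sum1 j hj)

lemma bern_sum2C (j : ℕ) :
    ∑ ℓ ∈ range (j + 1), (-1 : ℂ) ^ ℓ * ((bernoulli ℓ : ℚ) : ℂ) /
      ((Nat.factorial ℓ : ℂ) * (Nat.factorial (j - ℓ + 1) : ℂ)) = 1 / (Nat.factorial j : ℂ) := by
  have h := congrArg (fun q : ℚ => (q : ℂ)) (bern_sum2 j)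
  push_cast at h
  exact h

lemma key (n : ℕ) (hn : 1 ≤ n) (L : ℂ) (A B : ℕ → ℂ) :
    ∑ k ∈ range n, L ^ k / (Nat.factorial (k + 1) : ℂ) *
      ∑ ℓ ∈ range (n - k), ((bernoulli ℓ : ℚ) : ℂ) / (Nat.factorial ℓ : ℂ) * L ^ ℓ *
        (A (n - k - ℓ) - (-1) ^ (n - k) * B (n - k - ℓ))
    = A n - (-1) ^ n * ∑ k ∈ range n, (-L) ^ k / (Nat.factorial k : ℂ) * B (n - k) := by
  have step1 : ∑ k ∈ range n, L ^ k / (Nat.factorial (k + 1) : ℂ) *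
      ∑ ℓ ∈ range (n - k), ((bernoulli ℓ : ℚ) : ℂ) / (Nat.factorial ℓ : ℂ) * L ^ ℓ *
        (A (n - k - ℓ) - (-1) ^ (n - k) * B (n - k - ℓ))
      = ∑ k ∈ range n, ∑ ℓ ∈ range (n - k),
          L ^ (k + ℓ) * (((bernoulli ℓ : ℚ) : ℂ) /
            ((Nat.factorial ℓ : ℂ) * (Nat.factorial (k + 1) : ℂ))) *
          (A (n - (k + ℓ)) - (-1) ^ (n - k) * B (n - (k + ℓ))) := by
    refine Finset.sum_congr rfl fun k hk => ?_
    rw [Finset.mul_sum]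
    refine Finset.sum_congr rfl fun ℓ hℓ => ?_
    rw [Nat.sub_sub, pow_add]
    ring
  rw [step1, triangle_swap n (fun k ℓ => L ^ (k + ℓ) * (((bernoulli ℓ : ℚ) : ℂ) /
      ((Nat.factorial ℓ : ℂ) * (Nat.factorial (k + 1) : ℂ))) *
      (A (n - (k + ℓ)) - (-1) ^ (n - k) * B (n - (k + ℓ))))]
  have step3 : ∀ j ∈ range n, ∑ ℓ ∈ range (j + 1),
      L ^ ((j - ℓ) + ℓ) * (((bernoulli ℓ : ℚ) : ℂ) /
        ((Nat.factorial ℓ : ℂ) * (Nat.factorial ((j - ℓ) + 1) : ℂ))) *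
        (A (n - ((j - ℓ) + ℓ)) - (-1) ^ (n - (j - ℓ)) * B (n - ((j - ℓ) + ℓ)))
      = (if j = 0 then 1 else 0) * (L ^ j * A (n - j))
        - (1 / (Nat.factorial j : ℂ)) * (L ^ j * (-1) ^ (n - j) * B (n - j)) := by
    intro j hj
    rw [mem_range] at hj
    have hstep : ∀ ℓ ∈ range (j + 1),
        L ^ ((j - ℓ) + ℓ) * (((bernoulli ℓ : ℚ) : ℂ) /
          ((Nat.factorial ℓ : ℂ) * (Nat.factorial ((j - ℓ) + 1) : ℂ))) *
          (A (n - ((j - ℓ) + ℓ)) - (-1) ^ (n - (j - ℓ)) * B (n - ((j - ℓ) + ℓ)))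
        = (((bernoulli ℓ : ℚ) : ℂ) / ((Nat.factorial ℓ : ℂ) * (Nat.factorial (j - ℓ + 1) : ℂ)))
            * (L ^ j * A (n - j))
          - ((-1) ^ ℓ * ((bernoulli ℓ : ℚ) : ℂ) /
              ((Nat.factorial ℓ : ℂ) * (Nat.factorial (j - ℓ + 1) : ℂ)))
            * (L ^ j * (-1) ^ (n - j) * B (n - j)) := by
      intro ℓ hℓ
      rw [mem_range] at hℓ
      have h1 : (j - ℓ) + ℓ = j := by omega
      have h2 : n - (j - ℓ) = (n - j) + ℓ := by omega
      rw [h1, h2, pow_add]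
      ring
    rw [Finset.sum_congr rfl hstep, Finset.sum_sub_distrib, ← Finset.sum_mul, ← Finset.sum_mul,
      bern_sum2C j]
    congr 1
    by_cases h0 : j = 0
    · subst h0
      norm_num [bernoulli]
    · rw [bern_sum1C j h0]
      simp [h0]
  rw [Finset.sum_congr rfl step3, Finset.sum_sub_distrib]
  congr 1
  · have hite : ∀ x ∈ range n, (if x = 0 then (1:ℂ) else 0) * (L ^ x * A (n - x))
        = if x = 0 then L ^ x * A (n - x) else 0 := by
      intro x _
      split <;> simp
    rw [Finset.sum_congr rfl hite, Finset.sum_ite_eq' (range n) 0 (fun x => L ^ x * A (n - x))]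
    have h0 : 0 ∈ range n := mem_range.mpr (by omega)
    simp [h0]
  · rw [Finset.mul_sum]
    refine Finset.sum_congr rfl fun j hj => ?_
    rw [mem_range] at hj
    have hle : j ≤ n := hj.le
    have hsq : (-1 : ℂ) ^ j * (-1) ^ j = 1 := by
      rw [← mul_pow]; norm_num
    have hpow : (-1 : ℂ) ^ (n - j) = (-1) ^ n * (-1) ^ j := by
      have h := pow_add (-1 : ℂ) (n - j) j
      rw [Nat.sub_add_cancel hle] at h
      calc (-1 : ℂ) ^ (n - j) = (-1 : ℂ) ^ (n - j) * ((-1) ^ j * (-1) ^ j) := by rw [hsq, mul_one]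
        _ = (-1 : ℂ) ^ n * (-1) ^ j := by rw [← mul_assoc, ← h]
    rw [hpow, neg_pow]
    ring

/-- The classical polylogarithm `Li_n(x) = ∑_{k≥1} x^k/k^n`. -/
noncomputable def Li (n : ℕ) (x : ℂ) : ℂ := ∑' k : ℕ, x ^ (k + 1) / ((k : ℂ) + 1) ^ n

/-- `log|x|²`, as a complex number (via the real logarithm of `|x|²`). -/
noncomputable def logAbsSq (x : ℂ) : ℂ := ((Real.log (Complex.normSq x) : ℝ) : ℂ)

/-- The single-valued polylogarithm
`sv(Li_n)(x) = Li_n(x) − (−1)^n ∑_{k=0}^{n−1} (−log|x|²)^k/k! · Li_{n−k}(x̄)`. -/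
noncomputable def svLi (n : ℕ) (x : ℂ) : ℂ :=
  Li n x - (-1) ^ n * ∑ k ∈ range n,
    (-logAbsSq x) ^ k / (Nat.factorial k : ℂ) * Li (n - k) ((starRingEnd ℂ) x)

/-- `P̃_m(x) = ∑_{ℓ=0}^{m−1} (B_ℓ/ℓ!)·log^ℓ|x|²·(Li_{m−ℓ}(x) − (−1)^m Li_{m−ℓ}(x̄))`. -/
noncomputable def Ptilde (m : ℕ) (x : ℂ) : ℂ :=
  ∑ ℓ ∈ range m, ((bernoulli ℓ : ℚ) : ℂ) / (Nat.factorial ℓ : ℂ) * logAbsSq x ^ ℓ *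
    (Li (m - ℓ) x - (-1) ^ m * Li (m - ℓ) ((starRingEnd ℂ) x))

/-- For `n > 1` and `0 < |x| < 1`, the single-valued polylogarithm satisfies
`sv(Li_n)(x) = ∑_{k=0}^{n−1} log^k|x|²/(k+1)! · P̃_{n−k}(x)`. -/
theorem svLi_eq_sum_Ptilde (n : ℕ) (hn : 1 < n) (x : ℂ) (hx0 : x ≠ 0)
    (hx : ‖x‖ < 1) :
    svLi n x = ∑ k ∈ range n,
      logAbsSq x ^ k / (Nat.factorial (k + 1) : ℂ) * Ptilde (n - k) x := by
  rw [svLi]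
  simp only [Ptilde]
  exact (key n hn.le (logAbsSq x) (fun m => Li m x) (fun m => Li m ((starRingEnd ℂ) x))).symm
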